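/- For every odd n ≥ 3 and every m ≥ 2, the disjoint union of m copies of the wheel W_n = K₁ + C_n admits a C₃-supermagic labeling with magic constant (m/2)(13n+11)+3. -/
import Mathlib

/-- auxiliary sequence: permutation of `{0,…,n-1}` (for odd `n`) whose cyclic
consecutive sums are `(n-1)/2 + (i+1) % n`. -/
def dd (n i : ℕ) : ℕ := if i % 2 = 0 then i / 2 else (n + i) / 2

lemma dd_lt (n i : ℕ) (h2 : n % 2 = 1) (hi : i < n) : dd n i < n := by
  unfold dd; split <;> omega

lemma dd_inj (n i i' : ℕ) (h2 : n % 2 = 1) (hi : i < n) (hi' : i' < n)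
    (h : dd n i = dd n i') : i = i' := by
  unfold dd at h; split at h <;> split at h <;> omega

lemma dd_pair (n k a : ℕ) (hk : n = 2 * k + 1) (hk1 : 1 ≤ k) (ha : a < n) :
    dd n a + dd n ((a + 1) % n) = k + (a + 1) % n := by
  rcases Nat.lt_or_ge (a + 1) n with h | h
  · rw [Nat.mod_eq_of_lt h]; unfold dd; split <;> split <;> omega
  · have hn : a + 1 = n := by omega
    rw [← hn, Nat.mod_self]
    unfold dd; split <;> split <;> omega

lemma modD (n k i : ℕ) (hk : n = 2 * k + 1) (hk1 : 1 ≤ k) (hi : i < n) :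
    (i + 1) % n + (i + 1 + k) % n = k + (2 * i + 2) % n := by
  rcases Nat.lt_or_ge (i + 1) n with h | h
  · rw [Nat.mod_eq_of_lt h]
    rcases Nat.lt_or_ge (i + 1 + k) n with h2 | h2
    · rw [Nat.mod_eq_of_lt h2, Nat.mod_eq_of_lt (by omega : 2 * i + 2 < n)]
      omega
    · rw [Nat.mod_eq_sub_mod h2, Nat.mod_eq_of_lt (by omega),
        Nat.mod_eq_sub_mod (by omega : n ≤ 2 * i + 2),
        Nat.mod_eq_of_lt (by omega)]
      omega
  · have hn : i + 1 = n := by omega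
    have e1 : (i + 1) % n = 0 := by rw [hn, Nat.mod_self]
    have e2 : (i + 1 + k) % n = k := by
      rw [hn, Nat.add_mod_left, Nat.mod_eq_of_lt (by omega)]
    have e3 : (2 * i + 2) % n = 0 := by
      have : 2 * i + 2 = n + n := by omega
      rw [this, Nat.add_mod_left, Nat.mod_self]
    rw [e1, e2, e3]; omega
lemma mul_bound (m n d : ℕ) (h : d < n) : m * d + m ≤ m * n := by
  have := Nat.mul_le_mul_left m h
  simpa [Nat.mul_succ] using this

lemma mul_add_inj (m D j D' j' : ℕ) (hj : j < m) (hj' : j' < m)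
    (h : m * D + j = m * D' + j') : D = D' ∧ j = j' := by
  have e1 : (m * D + j) % m = j := by
    rw [Nat.mul_add_mod, Nat.mod_eq_of_lt hj]
  have e2 : (m * D' + j') % m = j' := by
    rw [Nat.mul_add_mod, Nat.mod_eq_of_lt hj']
  have hjj : j = j' := by rw [← e1, ← e2, h]
  subst hjj
  have hD : m * D = m * D' := by omega
  exact ⟨Nat.eq_of_mul_eq_mul_left (by omega) hD, rfl⟩

lemma mod_inj_add (n k i i' : ℕ) (hi : i < n) (hi' : i' < n)
    (h : (i + k) % n = (i' + k) % n) : i = i' := by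
  have h2 : i ≡ i' [MOD n] := Nat.ModEq.add_right_cancel' k h
  rwa [Nat.ModEq, Nat.mod_eq_of_lt hi, Nat.mod_eq_of_lt hi'] at h2

lemma two_mul_mod_inj (n i i' : ℕ) (h2 : n % 2 = 1) (hi : i < n) (hi' : i' < n)
    (h : (2 * i + 2) % n = (2 * i' + 2) % n) : i = i' := by
  have h1 : 2 * i ≡ 2 * i' [MOD n] := Nat.ModEq.add_right_cancel' 2 h
  have hg : Nat.gcd n 2 = 1 := (Nat.coprime_two_right).mpr (Nat.odd_iff.mpr h2)
  have h3 : i ≡ i' [MOD n] := Nat.ModEq.cancel_left_of_coprime hg h1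
  rwa [Nat.ModEq, Nat.mod_eq_of_lt hi, Nat.mod_eq_of_lt hi'] at h3

/-- the supermagic labeling of `m` copies of `Wₙ`. -/
def lab (m n : ℕ) : (Fin m ⊕ Fin m × Fin n) ⊕ ((Fin m × Fin n) ⊕ (Fin m × Fin n)) → ℕ
  | .inl (.inl j) => m - j.1
  | .inl (.inr (j, i)) => 2 * m - j.1 + m * dd n i.1
  | .inr (.inl (j, i)) => m * n + m + 1 + j.1 + m * dd n ((i.1 + (n - 1) / 2) % n)
  | .inr (.inr (j, i)) => 3 * (m * n) + 1 + j.1 - m * ((2 * i.1 + 2) % n)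

lemma lab_inj (m n : ℕ) (hm : 2 ≤ m) (hn : 3 ≤ n) (h2 : n % 2 = 1) :
    Function.Injective (lab m n) := by
  have hn0 : 0 < n := by omega
  have Bv : ∀ i : Fin n, m * dd n i.1 + m ≤ m * n := fun i =>
    mul_bound m n _ (dd_lt n _ h2 i.2)
  have Bs : ∀ i : Fin n, m * dd n ((i.1 + (n - 1) / 2) % n) + m ≤ m * n := fun i =>
    mul_bound m n _ (dd_lt n _ h2 (Nat.mod_lt _ hn0))
  have Bt : ∀ i : Fin n, m * ((2 * i.1 + 2) % n) + m ≤ m * n := fun i =>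
    mul_bound m n _ (Nat.mod_lt _ hn0)
  intro x y h
  obtain (a | ⟨a, b⟩) | (⟨a, b⟩ | ⟨a, b⟩) := x <;>
    obtain (c | ⟨c, d⟩) | (⟨c, d⟩ | ⟨c, d⟩) := y <;>
    simp only [lab] at h
  -- hub-hub
  · simp only [Sum.inl.injEq]
    exact Fin.ext (by have := a.isLt; have := c.isLt; omega)
  -- hub-rim
  · exact absurd h (by have := a.isLt; have := c.isLt; omega)
  -- hub-spoke
  · exact absurd h (by have := a.isLt; omega)
  -- hub-redge
  · exact absurd h (by have := a.isLt; have := Bt d; omega)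
  -- rim-hub
  · exact absurd h (by have := a.isLt; have := c.isLt; omega)
  -- rim-rim
  · have h' : m * dd n b.1 + (m - 1 - a.1) = m * dd n d.1 + (m - 1 - c.1) := by
      have := a.isLt; have := c.isLt; omega
    obtain ⟨hD, hj⟩ := mul_add_inj m _ _ _ _
      (by have := a.isLt; omega) (by have := c.isLt; omega) h'
    simp only [Sum.inl.injEq, Sum.inr.injEq, Prod.mk.injEq]
    refine ⟨Fin.ext (by have := a.isLt; have := c.isLt; omega),
      Fin.ext (dd_inj n _ _ h2 b.2 d.2 hD)⟩
  -- rim-spoke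
  · exact absurd h (by have := a.isLt; have := Bv b; omega)
  -- rim-redge
  · exact absurd h (by have := a.isLt; have := Bv b; have := Bt d; omega)
  -- spoke-hub
  · exact absurd h (by have := c.isLt; omega)
  -- spoke-rim
  · exact absurd h (by have := c.isLt; have := Bv d; omega)
  -- spoke-spoke
  · have h' : m * dd n ((b.1 + (n - 1) / 2) % n) + a.1
        = m * dd n ((d.1 + (n - 1) / 2) % n) + c.1 := by omega
    obtain ⟨hD, hj⟩ := mul_add_inj m _ _ _ _ a.isLt c.isLt h'
    have hbd : b.1 = d.1 :=
      mod_inj_add n _ _ _ b.2 d.2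
        (dd_inj n _ _ h2 (Nat.mod_lt _ hn0) (Nat.mod_lt _ hn0) hD)
    simp only [Sum.inr.injEq, Sum.inl.injEq, Prod.mk.injEq]
    exact ⟨Fin.ext hj, Fin.ext hbd⟩
  -- spoke-redge
  · exact absurd h (by have := a.isLt; have := Bs b; have := Bt d; omega)
  -- redge-hub
  · exact absurd h (by have := c.isLt; have := Bt b; omega)
  -- redge-rim
  · exact absurd h (by have := c.isLt; have := Bv d; have := Bt b; omega)
  -- redge-spoke
  · exact absurd h (by have := c.isLt; have := Bs d; have := Bt b; omega)
  -- redge-redge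
  · have h' : m * ((2 * d.1 + 2) % n) + a.1 = m * ((2 * b.1 + 2) % n) + c.1 := by
      have := Bt b; have := Bt d; have := a.isLt; have := c.isLt; omega
    obtain ⟨hD, hj⟩ := mul_add_inj m _ _ _ _ a.isLt c.isLt h'
    have hbd : b.1 = d.1 := two_mul_mod_inj n _ _ h2 b.2 d.2 hD.symm
    simp only [Sum.inr.injEq, Prod.mk.injEq]
    exact ⟨Fin.ext hj, Fin.ext hbd⟩

lemma lab_mem (m n : ℕ) (hm : 2 ≤ m) (hn : 3 ≤ n) (h2 : n % 2 = 1) :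
    ∀ z, lab m n z ∈ Set.Icc 1 (3 * (m * n) + m) := by
  have hn0 : 0 < n := by omega
  intro z
  obtain (a | ⟨a, b⟩) | (⟨a, b⟩ | ⟨a, b⟩) := z <;> simp only [lab, Set.mem_Icc]
  · have := a.isLt; have : 0 < m * n := by positivity
    omega
  · have := a.isLt
    have := mul_bound m n _ (dd_lt n _ h2 b.2)
    omega
  · have := a.isLt
    have := mul_bound m n (dd n ((b.1 + (n - 1) / 2) % n)) (dd_lt n _ h2 (Nat.mod_lt _ hn0))
    omega
  · have := a.isLt
    have := mul_bound m n (((2 * b.1 + 2) % n)) (Nat.mod_lt _ hn0)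
    omega

/-- `mWₙ` (m ≥ 2 copies of the wheel `Wₙ = K₁ + Cₙ`, odd n ≥ 3) is `C₃`-supermagic
with magic constant `(m/2)(13n + 11) + 3`.
Vertices: hubs `Fin m` and rim vertices `Fin m × Fin n`.
Edges: spokes `Fin m × Fin n` and rim edges `Fin m × Fin n`
(rim edge `(j, i)` joins `vᵢ` and `vᵢ₊₁ (mod n)`). -/
theorem mWheel_odd_C3_supermagic (m n : ℕ) (hm : 2 ≤ m) (hn : 3 ≤ n) (hodd : Odd n) :
    ∃ f : (Fin m ⊕ Fin m × Fin n) ⊕ ((Fin m × Fin n) ⊕ (Fin m × Fin n)) → ℕ,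
      Function.Injective f ∧
      Set.range f = Set.Icc 1 (m * (n + 1) + 2 * m * n) ∧
      (∀ x : Fin m ⊕ Fin m × Fin n, f (Sum.inl x) ≤ m * (n + 1)) ∧
      ∀ (j : Fin m) (i : Fin n),
        ((f (Sum.inl (Sum.inl j))
          + f (Sum.inl (Sum.inr (j, i)))
          + f (Sum.inl (Sum.inr (j, ⟨(i.val + 1) % n, Nat.mod_lt _ (by omega)⟩)))
          + f (Sum.inr (Sum.inl (j, i)))
          + f (Sum.inr (Sum.inl (j, ⟨(i.val + 1) % n, Nat.mod_lt _ (by omega)⟩)))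
          + f (Sum.inr (Sum.inr (j, i))) : ℕ) : ℚ)
        = (m : ℚ) / 2 * (13 * n + 11) + 3 := by
  have h2 : n % 2 = 1 := Nat.odd_iff.mp hodd
  have hn0 : 0 < n := by omega
  have hinj := lab_inj m n hm hn h2
  refine ⟨lab m n, hinj, ?_, ?_, ?_⟩
  · -- range
    have hN : m * (n + 1) + 2 * m * n = 3 * (m * n) + m := by ring
    rw [hN]
    have hsub : Set.range (lab m n) ⊆ Set.Icc 1 (3 * (m * n) + m) := by
      rintro y ⟨z, rfl⟩; exact lab_mem m n hm hn h2 z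
    refine Set.eq_of_subset_of_ncard_le hsub ?_ (Set.finite_Icc _ _)
    have e1 : (Set.range (lab m n)).ncard = 3 * (m * n) + m := by
      rw [← Nat.card_coe_set_eq, Nat.card_range_of_injective hinj,
        Nat.card_eq_fintype_card]
      simp only [Fintype.card_sum, Fintype.card_prod, Fintype.card_fin]
      ring
    have e2 : (Set.Icc 1 (3 * (m * n) + m)).ncard = 3 * (m * n) + m := by
      rw [← Finset.coe_Icc, Set.ncard_coe_finset, Nat.card_Icc]
      omega
    omega
  · -- vertex labels are small
    intro x
    have hN : m * (n + 1) = m * n + m := by ring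
    obtain (a | ⟨a, b⟩) := x <;> simp only [lab] <;> rw [hN]
    · have := a.isLt; omega
    · have := a.isLt
      have := mul_bound m n _ (dd_lt n _ h2 b.2)
      omega
  · -- magic constant
    intro j i
    simp only [lab]
    set k := (n - 1) / 2 with hkdef
    have hk : n = 2 * k + 1 := by omega
    have hk1 : 1 ≤ k := by omega
    rw [Nat.mod_add_mod (i.1 + 1) n k]
    have hA := dd_pair n k i.1 hk hk1 i.2
    have hW : (i.1 + k) % n < n := Nat.mod_lt _ hn0
    have hC : dd n ((i.1 + k) % n) + dd n ((i.1 + 1 + k) % n) = k + (i.1 + 1 + k) % n := by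
      have h0 := dd_pair n k ((i.1 + k) % n) hk hk1 hW
      rw [Nat.mod_add_mod (i.1 + k) n 1] at h0
      have e : i.1 + k + 1 = i.1 + 1 + k := by omega
      rw [e] at h0; exact h0
    have hD := modD n k i.1 hk hk1 i.2
    have pA : m * dd n i.1 + m * dd n ((i.1 + 1) % n)
        = m * k + m * ((i.1 + 1) % n) := by
      rw [← Nat.mul_add, ← Nat.mul_add, hA]
    have pC : m * dd n ((i.1 + k) % n) + m * dd n ((i.1 + 1 + k) % n)
        = m * k + m * ((i.1 + 1 + k) % n) := by
      rw [← Nat.mul_add, ← Nat.mul_add, hC]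
    have pD : m * ((i.1 + 1) % n) + m * ((i.1 + 1 + k) % n)
        = m * k + m * ((2 * i.1 + 2) % n) := by
      rw [← Nat.mul_add, ← Nat.mul_add, hD]
    have hbT : m * ((2 * i.1 + 2) % n) + m ≤ m * n := mul_bound m n _ (Nat.mod_lt _ hn0)
    have hmn : m * n = 2 * (m * k) + m := by rw [hk]; ring
    have hj := j.isLt
    have key : m - j.1 + (2 * m - j.1 + m * dd n i.1)
        + (2 * m - j.1 + m * dd n ((i.1 + 1) % n))
        + (m * n + m + 1 + j.1 + m * dd n ((i.1 + k) % n))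
        + (m * n + m + 1 + j.1 + m * dd n ((i.1 + 1 + k) % n))
        + (3 * (m * n) + 1 + j.1 - m * ((2 * i.1 + 2) % n))
        = 13 * (m * k) + 12 * m + 3 := by omega
    rw [key]
    have hnq : (n : ℚ) = 2 * k + 1 := by exact_mod_cast hk
    push_cast
    rw [hnq]
    ring
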